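/- The number of vertices labeled by n in the k-extended action graph A^k_n equals C^k_n, the n-th term of the k-th self-convolution of the Catalan sequence; equivalently (via the bijection with forests), the number of leaves of A^k_n equals the number of ordered forests of k+1 planar rooted trees with n edges. -/

import Mathlib

/-- Convolution of sequences: `(A ∗ B) n = ∑_{m=0}^n A m * B (n-m)`. -/
def seqConv (A B : ℕ → ℕ) (n : ℕ) : ℕ := ∑ m ∈ Finset.range (n + 1), A m * B (n - m)

/-- `catConv k` is the `k`-th self-convolution of the Catalan sequence
(the convolution of `k+1` copies of `catalan`). -/
def catConv : ℕ → ℕ → ℕ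
  | 0 => catalan
  | k + 1 => seqConv (catConv k) catalan

/-- A planar rooted tree: an ordered list of planar rooted subtrees. -/
inductive PTree : Type where
  | node : List PTree → PTree

/-- Number of edges of a planar rooted tree. -/
def PTree.edges : PTree → ℕ
  | .node ts => ts.length + (ts.attach.map (fun t => PTree.edges t.1)).sum
decreasing_by
  simp [PTree.node.sizeOf_spec, Nat.add_comm 1]
  exact (List.sizeOf_lt_of_mem t.2).le

/-- A directed graph with vertices labeled by integers.  Trivial (loop) edges at
each vertex are left implicit; `E` records the nontrivial edges. -/
structure LGraph where
  V : Type
  E : V → V → Prop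
  label : V → ℤ

/-- Directed paths in `G` ending at a vertex labeled `n`, recorded as the list of
vertices visited.  A singleton list is the trivial path at a vertex. -/
def LGraph.Paths (G : LGraph) (n : ℤ) : Type :=
  {l : List G.V // l ≠ [] ∧ l.Chain' G.E ∧ ∃ v, l.getLast? = some v ∧ G.label v = n}

/-- One inductive step: for each directed path ending at a vertex labeled `n`
(including the trivial path), adjoin a new edge from the initial vertex of the
path to a new vertex labeled `n + 1`. -/
def LGraph.step (G : LGraph) (n : ℤ) : LGraph where
  V := G.V ⊕ G.Paths n
  E := fun a b =>
    match a, b with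
    | .inl u, .inl v => G.E u v
    | .inl u, .inr p => p.1.head? = some u
    | _, _ => False
  label := Sum.elim G.label fun _ => n + 1

/-- The initial graph `A^k_0`: a directed path on `k+1` vertices labeled `-k, …, -1, 0`. -/
def baseGraph (k : ℕ) : LGraph where
  V := Fin (k + 1)
  E := fun i j => (j : ℕ) = (i : ℕ) + 1
  label := fun i => (i : ℤ) - (k : ℤ)

/-- The `k`-extended action graph `A^k_n`. -/
def actionGraph (k : ℕ) : ℕ → LGraph
  | 0 => baseGraph k
  | n + 1 => (actionGraph k n).step n

-- Module D : counting PTrees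
theorem PTree.edges_node (ts : List PTree) :
    PTree.edges (.node ts) = ts.length + (ts.map PTree.edges).sum := by
  rw [PTree.edges.eq_1]
  congr 1
  exact congrArg List.sum (List.attach_map_val (l := ts) (f := PTree.edges))

def listToT : List PTree → Tree Unit
  | [] => .nil
  | (.node cs) :: rest => .node () (listToT cs) (listToT rest)
decreasing_by all_goals simp [PTree.node.sizeOf_spec] <;> omega

def tToList : Tree Unit → List PTree
  | .nil => []
  | .node _ l r => .node (tToList l) :: tToList r

theorem listToT_tToList (t : Tree Unit) : listToT (tToList t) = t := by
  induction t with
  | nil => simp [tToList, listToT]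
  | node _ l r ihl ihr => simp [tToList, listToT, ihl, ihr]

theorem tToList_listToT_aux (N : ℕ) : ∀ l : List PTree, sizeOf l ≤ N → tToList (listToT l) = l := by
  induction N with
  | zero => intro l h; cases l with
    | nil => rw [listToT, tToList]
    | cons a r => exfalso; simp at h
  | succ N ih =>
    intro l h
    cases l with
    | nil => rw [listToT, tToList]
    | cons a r =>
      obtain ⟨cs⟩ := a
      rw [listToT, tToList]
      have h1 : sizeOf cs ≤ N := by simp [PTree.node.sizeOf_spec] at h ⊢; omega
      have h2 : sizeOf r ≤ N := by simp [PTree.node.sizeOf_spec] at h ⊢; omega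
      rw [ih cs h1, ih r h2]

theorem tToList_listToT (l : List PTree) : tToList (listToT l) = l :=
  tToList_listToT_aux (sizeOf l) l le_rfl

theorem numNodes_listToT (N : ℕ) : ∀ l : List PTree, sizeOf l ≤ N →
    (listToT l).numNodes = (PTree.node l).edges := by
  induction N with
  | zero => intro l h; cases l with
    | nil => rw [listToT]; simp [Tree.numNodes, PTree.edges_node]
    | cons a r => exfalso; simp at h
  | succ N ih =>
    intro l h
    cases l with
    | nil => rw [listToT]; simp [Tree.numNodes, PTree.edges_node]
    | cons a r =>
      obtain ⟨cs⟩ := a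
      rw [listToT]
      have h1 : sizeOf cs ≤ N := by simp [PTree.node.sizeOf_spec] at h ⊢; omega
      have h2 : sizeOf r ≤ N := by simp [PTree.node.sizeOf_spec] at h ⊢; omega
      simp only [BinaryTree.numNodes, Tree.node, ih cs h1, ih r h2, PTree.edges_node, List.map_cons, List.sum_cons,
        List.length_cons]
      omega

/-- trees with n edges ≃ binary trees with n nodes -/
def ptreeEquiv : PTree ≃ Tree Unit where
  toFun t := listToT (match t with | .node ts => ts)
  invFun T := .node (tToList T)
  left_inv t := by obtain ⟨ts⟩ := t; simp [tToList_listToT]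
  right_inv T := listToT_tToList T

theorem ptreeEquiv_edges (t : PTree) : (ptreeEquiv t).numNodes = t.edges := by
  obtain ⟨ts⟩ := t
  exact numNodes_listToT (sizeOf ts) ts le_rfl

def ptreeEdgesEquiv (n : ℕ) : {t : PTree // t.edges = n} ≃ {T : Tree Unit // T.numNodes = n} :=
  ptreeEquiv.subtypeEquiv (fun t => by rw [ptreeEquiv_edges])

instance treeNumNodesFintype (n : ℕ) : Fintype {T : Tree Unit // T.numNodes = n} :=
  Fintype.subtype (Tree.treesOfNumNodesEq n) (fun _ => BinaryTree.mem_treesOfNumNodesEq)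

noncomputable instance ptreeFintypeEdges (n : ℕ) : Fintype {t : PTree // t.edges = n} :=
  Fintype.ofEquiv _ (ptreeEdgesEquiv n).symm

theorem card_ptree_edges (n : ℕ) : Nat.card {t : PTree // t.edges = n} = catalan n := by
  rw [Nat.card_congr (ptreeEdgesEquiv n),
    Nat.card_congr (Equiv.subtypeEquivRight (fun T => (BinaryTree.mem_treesOfNumNodesEq (n := n)).symm))]
  rw [Nat.card_eq_fintype_card, Fintype.card_coe]
  exact BinaryTree.treesOfNumNodesEq_card_eq_catalan n

-- Module C : counting forests
abbrev ForestT (k n : ℕ) := {f : Fin (k + 1) → PTree // ∑ j : Fin (k + 1), (f j).edges = n}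

instance ptreeFiniteLe (n : ℕ) : Finite {t : PTree // t.edges ≤ n} := by
  apply Finite.of_injective
    (fun t : {t : PTree // t.edges ≤ n} =>
      (⟨⟨t.1.edges, Nat.lt_succ_of_le t.2⟩, ⟨t.1, rfl⟩⟩ :
        Σ m : Fin (n+1), {t : PTree // t.edges = m.1}))
  intro a b h
  exact Subtype.ext (congrArg (fun p : Σ m : Fin (n+1), {t : PTree // t.edges = m.1} => p.2.1) h)

instance forestFinite (k n : ℕ) : Finite (ForestT k n) := by
  apply Finite.of_injective
    (fun f : ForestT k n => (fun j => ⟨f.1 j, by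
      have h := f.2
      have : (f.1 j).edges ≤ ∑ i : Fin (k+1), (f.1 i).edges :=
        Finset.single_le_sum (f := fun i => (f.1 i).edges) (fun _ _ => Nat.zero_le _)
          (Finset.mem_univ j)
      omega⟩ : Fin (k+1) → {t : PTree // t.edges ≤ n}))
  intro f g h
  apply Subtype.ext
  funext j
  exact congrArg Subtype.val (congrFun h j)

noncomputable instance (k n : ℕ) : Fintype (ForestT k n) := Fintype.ofFinite _

/-- the "init-sum" of a forest on `k+2` trees with `n` total edges -/
def isum (k n : ℕ) (f : ForestT (k + 1) n) : Fin (n + 1) :=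
  ⟨∑ j : Fin (k+1), (Fin.init f.1 j).edges, by
    have h := f.2
    rw [Fin.sum_univ_castSucc] at h
    simp only [Fin.init]
    omega⟩

def forestFiber (k n : ℕ) (m : Fin (n + 1)) :
    {f : ForestT (k + 1) n // isum k n f = m} ≃ (ForestT k m.1) × {t : PTree // t.edges = n - m.1} where
  toFun f :=
    (⟨Fin.init f.1.1, by
        have h := congrArg Fin.val f.2
        simpa [isum] using h⟩,
     ⟨f.1.1 (Fin.last (k+1)), by
        have h := congrArg Fin.val f.2
        have h2 := f.1.2
        rw [Fin.sum_univ_castSucc] at h2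
        simp only [isum, Fin.init] at h
        omega⟩)
  invFun p :=
    ⟨⟨Fin.snoc p.1.1 p.2.1, by
        rw [Fin.sum_univ_castSucc]
        simp only [Fin.snoc_castSucc, Fin.snoc_last]
        have h1 := p.1.2
        have h2 := p.2.2
        have h3 := m.2
        omega⟩,
      by
        apply Fin.ext
        simp only [isum]
        rw [show Fin.init (Fin.snoc p.1.1 p.2.1 : Fin (k+2) → PTree) = p.1.1 from Fin.init_snoc _ _]
        exact p.1.2⟩
  left_inv f := by
    apply Subtype.ext
    apply Subtype.ext
    exact Fin.snoc_init_self f.1.1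
  right_inv p := by
    refine Prod.ext (Subtype.ext ?_) (Subtype.ext ?_)
    · simp only [Fin.init_snoc]
    · simp only [Fin.snoc_last]

theorem card_forest (k n : ℕ) : Nat.card (ForestT k n) = catConv k n := by
  induction k generalizing n with
  | zero =>
    have e : ForestT 0 n ≃ {t : PTree // t.edges = n} :=
      { toFun := fun f => ⟨f.1 0, by have := f.2; rwa [Fin.sum_univ_one] at this⟩
        invFun := fun t => ⟨fun _ => t.1, by rw [Fin.sum_univ_one]; exact t.2⟩
        left_inv := fun f => by
          apply Subtype.ext; funext j
          have : j = 0 := by apply Fin.ext; omega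
          rw [this]
        right_inv := fun t => rfl }
    rw [Nat.card_congr e, card_ptree_edges]
    rfl
  | succ k ih =>
    rw [Nat.card_congr (Equiv.sigmaFiberEquiv (isum k n)).symm]
    have hfib : ∀ m : Fin (n+1), Nat.card {f : ForestT (k + 1) n // isum k n f = m}
        = catConv k m.1 * catalan (n - m.1) := fun m => by
      rw [Nat.card_congr (forestFiber k n m), Nat.card_prod, ih, card_ptree_edges]
    rw [Nat.card_eq_fintype_card, Fintype.card_sigma]
    show _ = seqConv (catConv k) catalan n
    rw [seqConv, ← Fin.sum_univ_eq_sum_range (fun m => catConv k m * catalan (n - m))]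
    congr 1
    funext m
    rw [← Nat.card_eq_fintype_card, hfib m]

-- Module B : surgery
def PTree.kids : PTree → List PTree | .node ts => ts

def ldepth : PTree → ℕ
  | .node [] => 0
  | .node (c :: _) => ldepth c + 1

def tgrow : ℕ → PTree → PTree
  | 0, .node ts => .node (.node [] :: ts)
  | _+1, .node [] => .node []
  | j+1, .node (c :: cs) => .node (tgrow j c :: cs)

def tremove : PTree → PTree × ℕ
  | .node [] => (.node [], 0)
  | .node (.node [] :: cs) => (.node cs, 0)
  | .node (.node (x :: xs) :: cs) =>
    let p := tremove (.node (x :: xs)); (.node (p.1 :: cs), p.2 + 1)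

theorem edges_eq_zero {t : PTree} (h : t.edges = 0) : t = .node [] := by
  obtain ⟨ts⟩ := t
  rw [PTree.edges_node] at h
  have : ts.length = 0 := by omega
  rw [List.length_eq_zero_iff.mp this]

theorem kids_tgrow {j : ℕ} {t : PTree} (h : j ≤ ldepth t) : (tgrow j t).kids ≠ [] := by
  match j, t with
  | 0, .node ts => simp [tgrow, PTree.kids]
  | j+1, .node [] => simp [ldepth] at h
  | j+1, .node (c :: cs) => simp [tgrow, PTree.kids]

theorem ldepth_tgrow {j : ℕ} {t : PTree} (h : j ≤ ldepth t) : ldepth (tgrow j t) = j + 1 := by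
  induction j generalizing t with
  | zero => obtain ⟨ts⟩ := t; rw [tgrow, ldepth, ldepth]
  | succ j ih =>
    obtain ⟨ts⟩ := t
    match ts with
    | [] => simp [ldepth] at h
    | c :: cs =>
      rw [tgrow, ldepth, ih (by rw [ldepth] at h; omega)]

theorem edges_tgrow {j : ℕ} {t : PTree} (h : j ≤ ldepth t) :
    (tgrow j t).edges = t.edges + 1 := by
  induction j generalizing t with
  | zero =>
    obtain ⟨ts⟩ := t
    rw [tgrow, PTree.edges_node, PTree.edges_node]
    simp [PTree.edges_node]
    omega
  | succ j ih =>
    obtain ⟨ts⟩ := t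
    match ts with
    | [] => simp [ldepth] at h
    | c :: cs =>
      rw [tgrow, PTree.edges_node, PTree.edges_node]
      simp only [List.map_cons, List.sum_cons, List.length_cons]
      rw [ih (by rw [ldepth] at h; omega)]
      omega

theorem tremove_tgrow {j : ℕ} {t : PTree} (h : j ≤ ldepth t) : tremove (tgrow j t) = (t, j) := by
  induction j generalizing t with
  | zero => obtain ⟨ts⟩ := t; rw [tgrow, tremove]
  | succ j ih =>
    obtain ⟨ts⟩ := t
    match ts with
    | [] => simp [ldepth] at h
    | c :: cs =>
      have hle : j ≤ ldepth c := by rw [ldepth] at h; omega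
      have hk := kids_tgrow hle
      rw [tgrow]
      match hg : tgrow j c with
      | .node [] => rw [hg] at hk; simp [PTree.kids] at hk
      | .node (x :: xs) =>
        rw [tremove]
        rw [← hg, ih hle]

theorem tgrow_tremove {t : PTree} (h : t.kids ≠ []) :
    (tremove t).2 ≤ ldepth (tremove t).1 ∧ tgrow (tremove t).2 (tremove t).1 = t := by
  generalize hN : sizeOf t = N
  induction N using Nat.strong_induction_on generalizing t with
  | _ N ih =>
  subst hN
  obtain ⟨ts⟩ := t
  match ts with
  | [] => simp [PTree.kids] at h
  | .node [] :: cs =>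
    rw [tremove]
    exact ⟨Nat.zero_le _, rfl⟩
  | .node (x :: xs) :: cs =>
    have hsz : sizeOf (PTree.node (x :: xs)) < sizeOf (PTree.node (PTree.node (x :: xs) :: cs)) := by
      simp [PTree.node.sizeOf_spec]; omega
    have hIH := ih _ hsz (t := .node (x :: xs)) (by simp [PTree.kids]) rfl
    rw [tremove]
    constructor
    · simp only
      rw [ldepth]
      omega
    · simp only
      rw [tgrow, hIH.2]

def esum (l : List PTree) : ℕ := (l.map PTree.edges).sum

def fstat : List PTree → ℕ
  | [] => 0
  | [t] => ldepth t
  | t :: r :: rest => if t.kids.isEmpty then fstat (r :: rest) + 1 else ldepth t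

def fgrow : ℕ → List PTree → List PTree
  | _, [] => []
  | j, [t] => [tgrow j t]
  | j, t :: r :: rest =>
    if t.kids.isEmpty ∧ j ≠ 0 then t :: fgrow (j-1) (r :: rest)
    else tgrow j t :: r :: rest

def fremove : List PTree → List PTree × ℕ
  | [] => ([], 0)
  | [t] => ((tremove t).1 :: [], (tremove t).2)
  | t :: r :: rest =>
    if esum (r :: rest) ≠ 0 ∧ t.kids.isEmpty then
      (t :: (fremove (r :: rest)).1, (fremove (r :: rest)).2 + 1)
    else ((tremove t).1 :: r :: rest, (tremove t).2)

theorem length_fgrow (j : ℕ) (l : List PTree) : (fgrow j l).length = l.length := by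
  induction l generalizing j with
  | nil => rfl
  | cons t rest ih =>
    match rest with
    | [] => rw [fgrow]; rfl
    | r :: rest' =>
      rw [fgrow]
      split
      · simp only [List.length_cons, ih]
      · rfl

theorem kids_empty_iff {t : PTree} : t.kids.isEmpty = true ↔ t.kids = [] :=
  List.isEmpty_iff

theorem ldepth_le_fstat {t : PTree} {rest : List PTree} (h : t.kids ≠ [] ∨ rest = []) :
    fstat (t :: rest) = ldepth t := by
  match rest with
  | [] => rw [fstat]
  | r :: rest' =>
    rw [fstat]
    rcases h with h | h
    · rw [if_neg (fun hx => h (kids_empty_iff.mp hx))]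
    · exact absurd h (by simp)

theorem fstat_fgrow {j : ℕ} {l : List PTree} (hne : l ≠ []) (h : j ≤ fstat l) :
    fstat (fgrow j l) = j + 1 := by
  induction l generalizing j with
  | nil => exact absurd rfl hne
  | cons t rest ih =>
    match rest with
    | [] =>
      rw [fstat] at h
      rw [fgrow, fstat, ldepth_tgrow h]
    | r :: rest' =>
      rw [fgrow]
      by_cases hc : t.kids.isEmpty ∧ j ≠ 0
      · rw [if_pos hc]
        have hst : j - 1 ≤ fstat (r :: rest') := by
          rw [fstat, if_pos hc.1] at h; omega
        have hgne : fgrow (j-1) (r :: rest') ≠ [] := by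
          have := length_fgrow (j-1) (r :: rest')
          intro hx; rw [hx] at this; simp at this
        match hg : fgrow (j-1) (r :: rest') with
        | [] => exact absurd hg hgne
        | g :: gs =>
          rw [fstat, if_pos hc.1, ← hg, ih (by simp) hst]
          omega
      · rw [if_neg hc]
        have hj : j ≤ ldepth t := by
          rcases Decidable.not_and_iff_or_not.mp hc with h1 | h2
          · rw [fstat, if_neg h1] at h; exact h
          · omega
        rw [ldepth_le_fstat (Or.inl (kids_tgrow hj)), ldepth_tgrow hj]

theorem esum_fgrow {j : ℕ} {l : List PTree} (hne : l ≠ []) (h : j ≤ fstat l) :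
    esum (fgrow j l) = esum l + 1 := by
  induction l generalizing j with
  | nil => exact absurd rfl hne
  | cons t rest ih =>
    match rest with
    | [] =>
      rw [fstat] at h
      rw [fgrow]
      simp only [esum, List.map_cons, List.map_nil, List.sum_cons, List.sum_nil]
      rw [edges_tgrow h]
      omega
    | r :: rest' =>
      rw [fgrow]
      by_cases hc : t.kids.isEmpty ∧ j ≠ 0
      · rw [if_pos hc]
        have hst : j - 1 ≤ fstat (r :: rest') := by
          rw [fstat, if_pos hc.1] at h; omega
        simp only [esum, List.map_cons, List.sum_cons] at *
        rw [ih (by simp) hst]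
        omega
      · rw [if_neg hc]
        have hj : j ≤ ldepth t := by
          rcases Decidable.not_and_iff_or_not.mp hc with h1 | h2
          · rw [fstat, if_neg h1] at h; exact h
          · omega
        simp only [esum, List.map_cons, List.sum_cons]
        rw [edges_tgrow hj]
        omega

theorem fremove_fgrow {j : ℕ} {l : List PTree} (hne : l ≠ []) (h : j ≤ fstat l) :
    fremove (fgrow j l) = (l, j) := by
  induction l generalizing j with
  | nil => exact absurd rfl hne
  | cons t rest ih =>
    match rest with
    | [] =>
      rw [fstat] at h
      rw [fgrow, fremove, tremove_tgrow h]
    | r :: rest' =>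
      rw [fgrow]
      by_cases hc : t.kids.isEmpty ∧ j ≠ 0
      · rw [if_pos hc]
        have hst : j - 1 ≤ fstat (r :: rest') := by
          rw [fstat, if_pos hc.1] at h; omega
        have hgne : fgrow (j-1) (r :: rest') ≠ [] := by
          have := length_fgrow (j-1) (r :: rest')
          intro hx; rw [hx] at this; simp at this
        match hg : fgrow (j-1) (r :: rest') with
        | [] => exact absurd hg hgne
        | g :: gs =>
          rw [fremove]
          have hesum : esum (g :: gs) ≠ 0 := by
            rw [← hg, esum_fgrow (by simp) hst]; omega
          rw [if_pos ⟨hesum, hc.1⟩, ← hg, ih (by simp) hst]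
          simp only [Prod.mk.injEq, List.cons.injEq, true_and, and_true]
          omega
      · rw [if_neg hc]
        have hj : j ≤ ldepth t := by
          rcases Decidable.not_and_iff_or_not.mp hc with h1 | h2
          · rw [fstat, if_neg h1] at h; exact h
          · omega
        rw [fremove]
        rw [if_neg (by
          rintro ⟨-, hk⟩
          exact (kids_tgrow hj) (kids_empty_iff.mp hk))]
        rw [tremove_tgrow hj]

theorem fgrow_fremove {l : List PTree} (h : esum l ≠ 0) :
    (fremove l).2 ≤ fstat (fremove l).1 ∧ fgrow (fremove l).2 (fremove l).1 = l := by
  induction l with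
  | nil => simp [esum] at h
  | cons t rest ih =>
    match rest with
    | [] =>
      have hk : t.kids ≠ [] := by
        intro hk
        obtain ⟨ts⟩ := t
        simp only [PTree.kids] at hk
        subst hk
        simp [esum, PTree.edges_node] at h
      have := tgrow_tremove hk
      rw [fremove]
      refine ⟨by rw [fstat]; exact this.1, ?_⟩
      rw [fgrow, this.2]
    | r :: rest' =>
      rw [fremove]
      by_cases hc : esum (r :: rest') ≠ 0 ∧ t.kids.isEmpty
      · rw [if_pos hc]
        have hih := ih hc.1
        have hlen : (fremove (r :: rest')).1.length = (r :: rest').length := by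
          conv_rhs => rw [← hih.2]
          rw [length_fgrow]
        have h1ne : (fremove (r :: rest')).1 ≠ [] := by
          intro hx; rw [hx] at hlen; simp at hlen
        constructor
        · simp only
          match h1 : (fremove (r :: rest')).1 with
          | [] => exact absurd h1 h1ne
          | g :: gs =>
            rw [fstat, if_pos hc.2]
            have := hih.1
            rw [h1] at this
            omega
        · simp only
          match h1 : (fremove (r :: rest')).1 with
          | [] => exact absurd h1 h1ne
          | g :: gs =>
            rw [fgrow, if_pos ⟨hc.2, by omega⟩]
            simp only [Nat.add_sub_cancel, List.cons.injEq, true_and]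
            rw [← h1, hih.2]
      · rw [if_neg hc]
        have hk : t.kids ≠ [] := by
          intro hkid
          rcases Decidable.not_and_iff_or_not.mp hc with h1 | h2
          · push_neg at h1
            obtain ⟨ts⟩ := t
            simp only [PTree.kids] at hkid
            subst hkid
            simp only [esum, List.map_cons, List.sum_cons, PTree.edges_node] at h h1
            simp [h1] at h
          · exact h2 (kids_empty_iff.mpr hkid)
        have := tgrow_tremove hk
        constructor
        · simp only
          match h1 : (tremove t).1 with
          | .node [] =>
            have h2 := this.1
            rw [h1, ldepth] at h2
            omega
          | .node (x :: xs) =>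
            rw [fstat, if_neg (by rw [kids_empty_iff]; simp [PTree.kids])]
            rw [← h1]
            exact this.1
        · simp only
          rw [fgrow]
          rw [if_neg ?_]
          · rw [this.2]
          · rintro ⟨hk1, hj1⟩
            have h2 := this.1
            match hq : (tremove t).1 with
            | .node qs =>
              rw [hq] at hk1 h2
              simp only [PTree.kids, List.isEmpty_iff] at hk1
              subst hk1
              rw [ldepth] at h2
              omega

-- forest list type
abbrev FLT (k n : ℕ) := {l : List PTree // l.length = k + 1 ∧ esum l = n}

theorem esum_zero_replicate {l : List PTree} (h : esum l = 0) :
    l = List.replicate l.length (.node []) := by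
  induction l with
  | nil => rfl
  | cons t rest ih =>
    simp only [esum, List.map_cons, List.sum_cons] at h
    have h1 : t.edges = 0 := by omega
    have h2 : esum rest = 0 := by simp only [esum]; omega
    rw [List.length_cons, List.replicate_succ, edges_eq_zero h1, ← ih h2]

theorem fstat_replicate (m : ℕ) : fstat (List.replicate (m+1) (PTree.node [])) = m := by
  induction m with
  | zero => rw [List.replicate_succ, List.replicate_zero, fstat, ldepth]
  | succ m ih =>
    rw [List.replicate_succ]
    rw [List.replicate_succ] at *
    rw [fstat, if_pos (by simp [PTree.kids]), ih]

theorem sigma_fin_ext {α : Type*} {φ : α → ℕ} {a b : Σ x : α, Fin (φ x + 1)}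
    (h1 : a.1 = b.1) (h2 : (a.2 : ℕ) = (b.2 : ℕ)) : a = b := by
  obtain ⟨a1, a2⟩ := a
  obtain ⟨b1, b2⟩ := b
  cases h1
  simp only at h2
  rw [Fin.ext h2]

def growEquiv (k n : ℕ) : (Σ R : FLT k n, Fin (fstat R.1 + 1)) ≃ FLT k (n + 1) where
  toFun p := ⟨fgrow p.2.1 p.1.1,
    by rw [length_fgrow]; exact p.1.2.1,
    by
      rw [esum_fgrow (by intro hx; have := p.1.2.1; rw [hx] at this; simp at this)
        (Nat.lt_succ_iff.mp p.2.2), p.1.2.2]⟩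
  invFun S :=
    have hS : esum S.1 ≠ 0 := by rw [S.2.2]; omega
    have hfr := fgrow_fremove hS
    have hlen : (fremove S.1).1.length = k + 1 := by
      have h2 := length_fgrow (fremove S.1).2 (fremove S.1).1
      rw [hfr.2] at h2
      rw [← h2]; exact S.2.1
    have hesum : esum (fremove S.1).1 = n := by
      have h2 := esum_fgrow (l := (fremove S.1).1)
        (by intro hx; rw [hx] at hlen; simp at hlen) hfr.1
      rw [hfr.2, S.2.2] at h2
      omega
    ⟨⟨(fremove S.1).1, hlen, hesum⟩, ⟨(fremove S.1).2, Nat.lt_succ_of_le hfr.1⟩⟩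
  left_inv p := by
    have hne : p.1.1 ≠ [] := by
      intro hx; have := p.1.2.1; rw [hx] at this; simp at this
    have h := fremove_fgrow hne (Nat.lt_succ_iff.mp p.2.2)
    apply sigma_fin_ext
    · apply Subtype.ext
      simp only
      rw [h]
    · simp only
      rw [h]
  right_inv S := by
    apply Subtype.ext
    simp only
    exact (fgrow_fremove (by rw [S.2.2]; omega)).2

theorem growEquiv_fstat (k n : ℕ) (p : Σ R : FLT k n, Fin (fstat R.1 + 1)) :
    fstat ((growEquiv k n p).1) = (p.2 : ℕ) + 1 :=
  fstat_fgrow (by intro hx; have := p.1.2.1; rw [hx] at this; simp at this)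
    (Nat.lt_succ_iff.mp p.2.2)

-- generic predecessor machinery
def LGraph.PathsTo (G : LGraph) (v : G.V) : Type :=
  {l : List G.V // l ≠ [] ∧ l.Chain' G.E ∧ l.getLast? = some v}

section Pred

variable {G : LGraph} (pred : G.V → Option G.V) (dep : G.V → ℕ)
variable (hE : ∀ u v, G.E u v ↔ pred v = some u)
variable (hdep : ∀ u v, pred v = some u → dep v = dep u + 1)
variable (hdep0 : ∀ v, pred v = none → dep v = 0)

def chainTo : ℕ → G.V → List G.V
  | 0, v => [v]
  | ℓ+1, v =>
    match pred v with
    | some u => chainTo ℓ u ++ [v]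
    | none => []

include hE hdep hdep0 in
theorem chainTo_spec {ℓ : ℕ} {v : G.V} (h : ℓ ≤ dep v) :
    chainTo pred ℓ v ≠ [] ∧ (chainTo pred ℓ v).Chain' G.E ∧
      (chainTo pred ℓ v).getLast? = some v ∧
      (∀ x, (chainTo pred ℓ v).head? = some x → dep x = dep v - ℓ) ∧
      (chainTo pred ℓ v).length = ℓ + 1 := by
  induction ℓ generalizing v with
  | zero =>
    refine ⟨by simp [chainTo], by simp [chainTo, List.Chain'], by simp [chainTo], ?_, by simp [chainTo]⟩
    intro x hx
    simp [chainTo] at hx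
    rw [hx]
    omega
  | succ ℓ ih =>
    match hp : pred v with
    | none => exact absurd (hdep0 v hp) (by omega)
    | some u =>
      have hdv : dep v = dep u + 1 := hdep u v hp
      have hIH := ih (v := u) (by omega)
      rw [chainTo, hp]
      refine ⟨by simp, ?_, List.getLast?_concat, ?_, by simp [hIH.2.2.2.2]⟩
      · show List.IsChain G.E (chainTo pred ℓ u ++ [v])
        rw [List.isChain_append]
        refine ⟨hIH.2.1, List.isChain_singleton v, ?_⟩
        intro x hx y hy
        simp only [List.head?_cons, Option.mem_def, Option.some.injEq] at hy
        rw [hIH.2.2.1] at hx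
        simp only [Option.mem_def, Option.some.injEq] at hx
        subst hx; subst hy
        exact (hE u v).mpr hp
      · intro x hx
        rw [List.head?_append_of_ne_nil _ hIH.1] at hx
        rw [hIH.2.2.2.1 x hx]
        omega

include hE hdep in
omit hdep0 in
theorem chain_eq_chainTo {l : List G.V} {v : G.V} (hne : l ≠ []) (hch : l.Chain' G.E)
    (hl : l.getLast? = some v) :
    l.length - 1 ≤ dep v ∧ l = chainTo pred (l.length - 1) v := by
  induction l using List.reverseRecOn generalizing v with
  | nil => exact absurd rfl hne
  | append_singleton l' x ih =>
    have hx : x = v := by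
      rw [List.getLast?_concat] at hl
      exact Option.some.inj hl
    subst hx
    cases l' with
    | nil => exact ⟨by simp, by simp [chainTo]⟩
    | cons w l''' =>
      have hne' : w :: l''' ≠ [] := by simp
      have hlast : (w :: l''').getLast? = some ((w :: l''').getLast hne') :=
        List.getLast?_eq_getLast _
      rw [show w :: l''' ++ [x] = (w :: l''') ++ [x] from rfl] at hch ⊢
      unfold List.Chain' at hch
      rw [List.isChain_append] at hch
      have hEuv : G.E ((w :: l''').getLast hne') x :=
        hch.2.2 _ (by rw [Option.mem_def, hlast]) x (by simp)
      have hpred : pred x = some ((w :: l''').getLast hne') := (hE _ x).mp hEuv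
      have hIH := ih hne' hch.1 hlast
      have hdv : dep x = dep ((w :: l''').getLast hne') + 1 := hdep _ x hpred
      have hlen : ((w :: l''') ++ [x]).length - 1 = (((w :: l''').length - 1)) + 1 := by simp
      constructor
      · simp only [List.length_append, List.length_cons, List.length_singleton] at *
        omega
      · rw [hlen]
        simp only [chainTo, hpred]
        rw [← hIH.2]

include hE hdep hdep0 in
def pathsToEquiv (v : G.V) : G.PathsTo v ≃ Fin (dep v + 1) where
  toFun l := ⟨dep v - (l.1.length - 1), by omega⟩
  invFun j := ⟨chainTo pred (dep v - (j : ℕ)) v,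
    (chainTo_spec pred dep hE hdep hdep0 (by omega)).1,
    (chainTo_spec pred dep hE hdep hdep0 (by omega)).2.1,
    (chainTo_spec pred dep hE hdep hdep0 (by omega)).2.2.1⟩
  left_inv l := by
    obtain ⟨l, hne, hch, hl⟩ := l
    have h := chain_eq_chainTo pred dep hE hdep hne hch hl
    apply Subtype.ext
    simp only
    rw [show dep v - (dep v - (l.length - 1)) = l.length - 1 by omega, ← h.2]
  right_inv j := by
    have h := (chainTo_spec pred dep hE hdep hdep0
      (show dep v - (j : ℕ) ≤ dep v by omega)).2.2.2.2
    apply Fin.ext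
    simp only [h]
    omega

include hE hdep hdep0 in
theorem pathsToEquiv_head (v : G.V) (l : G.PathsTo v) (x : G.V) (hx : l.1.head? = some x) :
    dep x = (pathsToEquiv pred dep hE hdep hdep0 v l : ℕ) := by
  obtain ⟨l, hne, hch, hl⟩ := l
  have h := chain_eq_chainTo pred dep hE hdep hne hch hl
  have hspec := (chainTo_spec pred dep hE hdep hdep0 h.1).2.2.2.1
  simp only at hx ⊢
  rw [h.2] at hx
  rw [hspec x hx]
  rfl

end Pred

def predA (k : ℕ) : (n : ℕ) → (actionGraph k n).V → Option (actionGraph k n).V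
  | 0, i => if (i : Fin (k+1)).val = 0 then none else some (⟨i.val - 1, by omega⟩ : Fin (k+1))
  | n+1, .inl v => (predA k n v).map Sum.inl
  | _+1, .inr p => some (.inl (p.1.head p.2.1))

def depA (k : ℕ) : (n : ℕ) → (actionGraph k n).V → ℕ
  | 0, i => (i : Fin (k+1)).val
  | n+1, .inl v => depA k n v
  | n+1, .inr p => depA k n (p.1.head p.2.1) + 1

theorem hE_A (k : ℕ) : ∀ n, ∀ u v : (actionGraph k n).V,
    (actionGraph k n).E u v ↔ predA k n v = some u := by
  intro n
  induction n with
  | zero =>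
    intro u v
    show (v : Fin (k+1)).val = (u : Fin (k+1)).val + 1 ↔ _
    rw [predA]
    by_cases h : (v : Fin (k+1)).val = 0
    · rw [if_pos h]
      simp only [iff_false, reduceCtorEq]
      omega
    · rw [if_neg h]
      refine Iff.trans ?_ Option.some_inj.symm
      constructor
      · intro hh; apply Fin.ext; simp; omega
      · intro hh
        have := congrArg Fin.val hh
        simp at this
        omega
  | succ n ih =>
    intro u v
    match u, v with
    | .inl u, .inl v =>
      show (actionGraph k n).E u v ↔ _
      rw [predA, ih u v]
      constructor
      · intro h; rw [h]; rfl
      · intro h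
        replace h := Option.map_eq_some_iff.mp h
        obtain ⟨x, hx, hxx⟩ := h
        rw [hx]
        congr 1
        exact Sum.inl.inj hxx
    | .inl u, .inr p =>
      show p.1.head? = some u ↔ _
      rw [predA]
      refine Iff.trans ?_ Option.some_inj.symm
      rw [List.head?_eq_head p.2.1]
      constructor
      · intro h; rw [Option.some.inj h]
      · intro h; rw [Sum.inl.inj h]
    | .inr p, .inl v =>
      show False ↔ _
      rw [predA]
      rw [false_iff]
      rintro h
      obtain ⟨x, -, hxx⟩ := Option.map_eq_some_iff.mp h
      exact (by simp : (Sum.inl x : (actionGraph k n).V ⊕ _) ≠ .inr p) hxx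
    | .inr p, .inr q =>
      show False ↔ _
      rw [predA]
      exact ⟨False.elim, fun h => Sum.inl_ne_inr (Option.some.inj h)⟩

theorem hdep_A (k : ℕ) : ∀ n, ∀ u v : (actionGraph k n).V,
    predA k n v = some u → depA k n v = depA k n u + 1 := by
  intro n
  induction n with
  | zero =>
    intro u v h
    rw [predA] at h
    by_cases hv : (v : Fin (k+1)).val = 0
    · rw [if_pos hv] at h; exact absurd h (by simp)
    · rw [if_neg hv] at h
      have := congrArg Fin.val (Option.some.inj h)
      show (v : Fin (k+1)).val = (u : Fin (k+1)).val + 1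
      simp at this
      omega
  | succ n ih =>
    intro u v h
    match u, v with
    | u, .inl v =>
      rw [predA] at h
      replace h := Option.map_eq_some_iff.mp h
      obtain ⟨x, hx, hxx⟩ := h
      subst hxx
      show depA k n v = _
      rw [depA, ih x v hx]
    | u, .inr p =>
      rw [predA] at h
      have := Option.some.inj h
      subst this
      show depA k (n+1) (.inr p) = _
      rw [depA, depA]

theorem hdep0_A (k : ℕ) : ∀ n, ∀ v : (actionGraph k n).V,
    predA k n v = none → depA k n v = 0 := by
  intro n
  induction n with
  | zero =>
    intro v h
    rw [predA] at h
    by_cases hv : (v : Fin (k+1)).val = 0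
    · exact hv
    · rw [if_neg hv] at h; exact absurd h (by simp)
  | succ n ih =>
    intro v h
    match v with
    | .inl v =>
      rw [predA] at h
      replace h := Option.map_eq_none_iff.mp h
      exact ih v h
    | .inr p =>
      rw [predA] at h
      exact absurd h (by simp)

theorem label_le (k : ℕ) : ∀ n, ∀ v : (actionGraph k n).V, (actionGraph k n).label v ≤ (n : ℤ) := by
  intro n
  induction n with
  | zero =>
    intro v
    show (v : Fin (k+1)).val - (k : ℤ) ≤ 0
    have := (v : Fin (k+1)).2
    have h2 : ((v : Fin (k+1)).val : ℤ) ≤ k := by exact_mod_cast Nat.lt_succ_iff.mp this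
    omega
  | succ n ih =>
    intro v
    match v with
    | .inl v =>
      show (actionGraph k n).label v ≤ _
      have := ih v
      push_cast
      omega
    | .inr p =>
      show (n : ℤ) + 1 ≤ _
      push_cast
      omega

abbrev LabT (k n : ℕ) := {v : (actionGraph k n).V // (actionGraph k n).label v = (n : ℤ)}

theorem not_inl_lab (k n : ℕ) (w : (actionGraph k n).V)
    (h : (actionGraph k (n+1)).label (.inl w) = ((n+1 : ℕ) : ℤ)) : False := by
  have h2 : (actionGraph k n).label w = ((n+1 : ℕ) : ℤ) := h
  have := label_le k n w
  rw [h2] at this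
  push_cast at this
  omega

def newToFun (k n : ℕ) : ∀ v : (actionGraph k (n+1)).V,
    (actionGraph k (n+1)).label v = ((n+1 : ℕ) : ℤ) → (actionGraph k n).Paths n
  | .inl w, h => absurd (not_inl_lab k n w h) not_false
  | .inr p, _ => p

def newVertexEquiv (k n : ℕ) : LabT k (n+1) ≃ (actionGraph k n).Paths n where
  toFun v := newToFun k n v.1 v.2
  invFun p := ⟨.inr p, by show (n : ℤ) + 1 = _; push_cast; ring⟩
  left_inv v := by
    obtain ⟨v1, h⟩ := v
    match v1 with
    | .inl w => exact absurd (not_inl_lab k n w h) not_false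
    | .inr p => rfl
  right_inv p := rfl

/-- terminal vertex of a path -/
def lastOf {G : LGraph} {m : ℤ} (p : G.Paths m) : {v : G.V // G.label v = m} :=
  ⟨p.1.getLast p.2.1, by
    obtain ⟨l, hne, hch, v, hl, hlab⟩ := p
    have : l.getLast? = some (l.getLast hne) := List.getLast?_eq_getLast _
    rw [this] at hl
    rw [Option.some.inj hl]
    exact hlab⟩

def pathsFiberEquiv {G : LGraph} {m : ℤ} (v0 : {v : G.V // G.label v = m}) :
    {p : G.Paths m // lastOf p = v0} ≃ G.PathsTo v0.1 where
  toFun p := ⟨p.1.1, p.1.2.1, p.1.2.2.1, by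
    have h := congrArg Subtype.val p.2
    simp only [lastOf] at h
    rw [List.getLast?_eq_getLast p.1.2.1, h]⟩
  invFun l := ⟨⟨l.1, l.2.1, l.2.2.1, ⟨v0.1, l.2.2.2, v0.2⟩⟩, by
    apply Subtype.ext
    simp only [lastOf]
    exact Option.some.inj ((List.getLast?_eq_getLast (l := l.1) l.2.1).symm.trans l.2.2.2)⟩
  left_inv p := by
    apply Subtype.ext
    apply Subtype.ext
    rfl
  right_inv l := by
    apply Subtype.ext
    rfl

def pathsSigmaEquiv (G : LGraph) (m : ℤ) :
    G.Paths m ≃ Σ v0 : {v : G.V // G.label v = m}, G.PathsTo v0.1 :=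
  (Equiv.sigmaFiberEquiv (lastOf (G := G) (m := m))).symm.trans
    (Equiv.sigmaCongrRight pathsFiberEquiv)


-- final glue
def forestListEquiv (k n : ℕ) : ForestT k n ≃ FLT k n where
  toFun f := ⟨List.ofFn f.1, by simp, by rw [esum, List.map_ofFn, List.sum_ofFn]; exact f.2⟩
  invFun l := ⟨fun j => l.1.get (Fin.cast l.2.1.symm j), by
    have h0 : esum l.1 = ∑ i : Fin l.1.length, (l.1.get i).edges := by
      conv_lhs => rw [esum, ← List.ofFn_get l.1, List.map_ofFn, List.sum_ofFn]
      rfl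
    have h1 : (∑ j : Fin (k+1), (l.1.get (Fin.cast l.2.1.symm j)).edges) = esum l.1 := by
      conv_rhs => rw [h0]
      exact Fintype.sum_equiv (finCongr l.2.1.symm) _ _ (fun j => rfl)
    rw [h1, l.2.2]⟩
  left_inv f := Subtype.ext (funext fun j => by
    show (List.ofFn f.1).get (Fin.cast _ j) = f.1 j
    rw [List.get_ofFn]
    rfl)
  right_inv l := Subtype.ext (by
    apply List.ext_getElem (by simp [l.2.1])
    intro i h1 h2
    rw [List.getElem_ofFn]
    rfl)

def depEquivA (k n : ℕ) (v : (actionGraph k n).V) :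
    (actionGraph k n).PathsTo v ≃ Fin (depA k n v + 1) :=
  pathsToEquiv (predA k n) (depA k n) (hE_A k n) (hdep_A k n) (hdep0_A k n) v

def baseEquiv (k : ℕ) : LabT k 0 ≃ FLT k 0 where
  toFun _ := ⟨List.replicate (k+1) (.node []), by simp, by
    simp [esum, List.map_replicate, PTree.edges_node]⟩
  invFun _ := ⟨(⟨k, by omega⟩ : Fin (k+1)), by
    show ((k : ℤ)) - (k : ℤ) = ((0 : ℕ) : ℤ)
    simp⟩
  left_inv v := by
    apply Subtype.ext
    have h : ((v.1 : Fin (k+1)).val : ℤ) - (k : ℤ) = ((0:ℕ) : ℤ) := v.2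
    apply Fin.ext
    simp only
    omega
  right_inv l := by
    apply Subtype.ext
    simp only
    rw [esum_zero_replicate l.2.2, l.2.1]

def mainEquiv (k : ℕ) : (n : ℕ) →
    {Φ : LabT k n ≃ FLT k n // ∀ v : LabT k n, depA k n v.1 = fstat (Φ v).1}
  | 0 =>
    ⟨baseEquiv k, by
      rintro ⟨v1, hv⟩
      have h : ((v1 : Fin (k+1)).val : ℤ) - (k : ℤ) = ((0:ℕ) : ℤ) := hv
      show (v1 : Fin (k+1)).val = fstat (List.replicate (k+1) (.node []))
      rw [fstat_replicate k]
      omega⟩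
  | n+1 =>
    let prev := mainEquiv k n
    let sigmaStep : (Σ v0 : LabT k n, Fin (depA k n v0.1 + 1)) ≃
        (Σ R : FLT k n, Fin (fstat R.1 + 1)) :=
      { toFun := fun q => ⟨prev.1 q.1, ⟨q.2.1, by rw [← prev.2 q.1]; exact q.2.2⟩⟩
        invFun := fun q => ⟨prev.1.symm q.1, ⟨q.2.1, by
          rw [prev.2 (prev.1.symm q.1), Equiv.apply_symm_apply]; exact q.2.2⟩⟩
        left_inv := fun q => sigma_fin_ext (Equiv.symm_apply_apply _ _) rfl
        right_inv := fun q => sigma_fin_ext (Equiv.apply_symm_apply _ _) rfl }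
    let Φstep :=
      (newVertexEquiv k n).trans
        ((pathsSigmaEquiv (actionGraph k n) n).trans
          ((Equiv.sigmaCongrRight (fun v0 : LabT k n => depEquivA k n v0.1)).trans
            (sigmaStep.trans (growEquiv k n))))
    ⟨Φstep, by
      rintro ⟨v1, hv⟩
      match v1 with
      | .inl w => exact absurd (not_inl_lab k n w hv) not_false
      | .inr p =>
        have hstep : Φstep ⟨.inr p, hv⟩ =
            growEquiv k n (sigmaStep ⟨lastOf p,
              depEquivA k n (lastOf p).1 (pathsFiberEquiv (lastOf p) ⟨p, rfl⟩)⟩) := rfl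
        have hgrow := growEquiv_fstat k n (sigmaStep ⟨lastOf p,
              depEquivA k n (lastOf p).1 (pathsFiberEquiv (lastOf p) ⟨p, rfl⟩)⟩)
        rw [hstep, hgrow]
        show depA k n (p.1.head p.2.1) + 1 = _
        have hhead := pathsToEquiv_head (predA k n) (depA k n) (hE_A k n) (hdep_A k n)
          (hdep0_A k n) (lastOf p).1 (pathsFiberEquiv (lastOf p) ⟨p, rfl⟩)
          (p.1.head p.2.1) (List.head?_eq_head p.2.1)
        rw [hhead]
        rfl⟩

theorem actionGraph_card_label_eq (k n : ℕ) :
    Nat.card {v : (actionGraph k n).V // (actionGraph k n).label v = (n : ℤ)} = catConv k n ∧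
    Nat.card {v : (actionGraph k n).V // (actionGraph k n).label v = (n : ℤ)} =
      Nat.card {f : Fin (k + 1) → PTree // ∑ j : Fin (k + 1), (f j).edges = n} := by
  have h1 : Nat.card (LabT k n) = Nat.card (FLT k n) := Nat.card_congr (mainEquiv k n).1
  have h2 : Nat.card (ForestT k n) = Nat.card (FLT k n) := Nat.card_congr (forestListEquiv k n)
  have h3 := card_forest k n
  constructor
  · rw [show Nat.card {v : (actionGraph k n).V // (actionGraph k n).label v = (n : ℤ)}
      = Nat.card (LabT k n) from rfl, h1, ← h2, h3]
  · rw [show Nat.card {v : (actionGraph k n).V // (actionGraph k n).label v = (n : ℤ)}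
      = Nat.card (LabT k n) from rfl, h1, ← h2]
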